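/- Let χ be a non-principal Dirichlet character modulo q and x ≥ 1. Then |∑_{d ≤ x} χ(d){x/d}| ≤ √(2φ(q)x), where {t} denotes the fractional part of t. -/

import Mathlib

open Finset

section Aux

variable {q : ℕ} (χ : DirichletCharacter ℂ q)

private lemma chi_period_ico (hq : 2 ≤ q) (hχ : χ ≠ 1) (a : ℕ) :
    ∑ d ∈ Finset.Ico a (a + q), χ d = 0 := by
  haveI : NeZero q := ⟨by omega⟩
  rw [Finset.sum_Ico_eq_sum_range]
  simp only [Nat.add_sub_cancel_left]
  have h1 : ∑ j ∈ Finset.range q, χ ((a : ZMod q) + (j : ZMod q))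
      = ∑ z : ZMod q, χ ((a : ZMod q) + z) := by
    apply Finset.sum_nbij' (fun j => ((j : ℕ) : ZMod q)) (fun z => z.val)
    · intro j hj; exact Finset.mem_univ _
    · intro z hz; exact Finset.mem_range.mpr (ZMod.val_lt z)
    · intro j hj; exact ZMod.val_cast_of_lt (Finset.mem_range.mp hj)
    · intro z hz; exact ZMod.natCast_rightInverse z
    · intro j hj; rfl
  have h2 : ∑ z : ZMod q, χ ((a : ZMod q) + z) = ∑ z : ZMod q, χ z :=
    Fintype.sum_equiv (Equiv.addLeft (a : ZMod q)) _ _ (fun z => rfl)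
  calc ∑ j ∈ Finset.range q, χ ((a + j : ℕ) : ZMod q)
      = ∑ j ∈ Finset.range q, χ ((a : ZMod q) + (j : ZMod q)) := by push_cast; rfl
    _ = 0 := by rw [h1, h2]; exact MulChar.sum_eq_zero_of_ne_one hχ

private lemma chi_period' (hq : 2 ≤ q) (hχ : χ ≠ 1) (a : ℕ) :
    ∑ d ∈ Finset.Ioc a (a + q), χ d = 0 := by
  have h : Finset.Ioc a (a + q) = Finset.Ico (a + 1) ((a + 1) + q) := by
    rw [← Finset.Icc_add_one_left_eq_Ioc, ← Finset.Ico_add_one_right_eq_Icc]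
    congr 1
    omega
  rw [h]
  exact chi_period_ico χ hq hχ (a + 1)

private lemma units_count' {q : ℕ} (a : ℕ) :
    ((Finset.Ioc a (a + q)).filter (fun d => q.Coprime d)).card = q.totient := by
  have h : Finset.Ioc a (a + q) = Finset.Ico (a + 1) ((a + 1) + q) := by
    rw [← Finset.Icc_add_one_left_eq_Ioc, ← Finset.Ico_add_one_right_eq_Icc]
    congr 1
    omega
  rw [h]
  exact Nat.filter_coprime_Ico_eq_totient q (a + 1)

private lemma abs_sum_le_card' (s : Finset ℕ) :
    ‖∑ d ∈ s, χ d‖ ≤ ((s.filter (fun d => q.Coprime d)).card : ℝ) := by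
  calc ‖∑ d ∈ s, χ d‖ ≤ ∑ d ∈ s, ‖χ (d : ZMod q)‖ := norm_sum_le _ _
    _ = ∑ d ∈ s.filter (fun d => q.Coprime d), ‖χ (d : ZMod q)‖ := by
        rw [Finset.sum_filter_of_ne]
        intro d _ hd
        rw [Nat.coprime_comm, ← ZMod.isUnit_iff_coprime]
        by_contra hu
        exact hd (by rw [χ.map_nonunit hu, norm_zero])
    _ ≤ ∑ d ∈ s.filter (fun d => q.Coprime d), 1 :=
        Finset.sum_le_sum (fun d _ => χ.norm_le_one _)
    _ = _ := by simp

private lemma chi_short (hq : 2 ≤ q) (hχ : χ ≠ 1) (a b : ℕ) (hab : b ≤ a + q) :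
    ‖∑ d ∈ Finset.Ioc a b, χ d‖ ≤ (q.totient : ℝ) / 2 := by
  rcases le_or_gt a b with h | h
  · have hsplit : (∑ d ∈ Finset.Ioc a b, χ d) + ∑ d ∈ Finset.Ioc b (a + q), χ d = 0 := by
      rw [Finset.sum_Ioc_consecutive _ h hab]
      exact chi_period' χ hq hχ a
    have h1 := abs_sum_le_card' χ (Finset.Ioc a b)
    have h2 := abs_sum_le_card' χ (Finset.Ioc b (a + q))
    have heq : ‖∑ d ∈ Finset.Ioc a b, χ d‖
        = ‖∑ d ∈ Finset.Ioc b (a + q), χ d‖ := by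
      rw [show (∑ d ∈ Finset.Ioc a b, χ d) = -(∑ d ∈ Finset.Ioc b (a + q), χ d) by
        linear_combination hsplit, norm_neg]
    have hcard : ((Finset.Ioc a b).filter (fun d => q.Coprime d)).card
        + ((Finset.Ioc b (a + q)).filter (fun d => q.Coprime d)).card = q.totient := by
      rw [← Finset.card_union_of_disjoint, ← Finset.filter_union,
        Finset.Ioc_union_Ioc_eq_Ioc h hab]
      · exact units_count' (q := q) a
      · apply Finset.disjoint_filter_filter
        rw [Finset.disjoint_left]
        intro d hd hd'
        simp only [Finset.mem_Ioc] at hd hd'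
        omega
    have := heq ▸ h2
    push_cast [← hcard] at h1 this ⊢
    linarith
  · simp [Finset.Ioc_eq_empty_of_le h.le]
    positivity

private lemma chi_partial (hq : 2 ≤ q) (hχ : χ ≠ 1) (a b : ℕ) :
    ‖∑ d ∈ Finset.Ioc a b, χ d‖ ≤ (q.totient : ℝ) / 2 := by
  have key : ∀ n a b : ℕ, b - a ≤ n →
      ‖∑ d ∈ Finset.Ioc a b, χ d‖ ≤ (q.totient : ℝ) / 2 := by
    intro n
    induction n with
    | zero => intro a b h; exact chi_short χ hq hχ a b (by omega)
    | succ n IH =>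
      intro a b h
      rcases le_or_gt b (a + q) with h' | h'
      · exact chi_short χ hq hχ a b h'
      · have hsplit : (∑ d ∈ Finset.Ioc a b, χ d)
            = (∑ d ∈ Finset.Ioc a (a + q), χ d) + ∑ d ∈ Finset.Ioc (a + q) b, χ d := by
          rw [Finset.sum_Ioc_consecutive _ (by omega) h'.le]
        rw [hsplit, chi_period' χ hq hχ a, zero_add]
        exact IH (a + q) b (by omega)
  exact key (b - a) a b le_rfl

private lemma tele_sum (f : ℕ → ℝ) (m n : ℕ) (h : m ≤ n) :
    ∑ i ∈ Finset.Ico m n, (f i - f (i + 1)) = f m - f n := by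
  induction n, h using Nat.le_induction with
  | base => simp
  | succ n hmn IH => rw [Finset.sum_Ico_succ_top hmn, IH]; ring

private lemma abel_identity (g f : ℕ → ℂ) (a b : ℕ) (hb : a < b) :
    ∑ d ∈ Finset.Ioc a b, g d * f d
      = (∑ d ∈ Finset.Ioc a b, g d) * f b
        + ∑ d ∈ Finset.Ico (a + 1) b, (∑ e ∈ Finset.Ioc a d, g e) * (f d - f (d + 1)) := by
  induction b, hb using Nat.le_induction with
  | base => simp [Nat.Ioc_succ_singleton]
  | succ b hb IH =>
    have h1 : a ≤ b := by omega
    rw [Finset.sum_Ioc_succ_top h1, Finset.sum_Ioc_succ_top h1, Finset.sum_Ico_succ_top hb, IH]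
    ring

private lemma blocks_sum (F : ℕ → ℂ) (u : ℕ → ℕ) (hu : Antitone u) (t : ℕ) :
    ∑ n ∈ Finset.range t, ∑ d ∈ Finset.Ioc (u (n + 1)) (u n), F d
      = ∑ d ∈ Finset.Ioc (u t) (u 0), F d := by
  induction t with
  | zero => simp
  | succ t IH =>
    rw [Finset.sum_range_succ, IH, add_comm,
      Finset.sum_Ioc_consecutive _ (hu (Nat.le_succ t)) (hu (Nat.zero_le t))]

private lemma abel_bound (g : ℕ → ℂ) (f : ℕ → ℝ) (a b : ℕ) (M : ℝ) (hM0 : 0 ≤ M)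
    (hM : ∀ t, a ≤ t → t ≤ b → ‖∑ d ∈ Finset.Ioc a t, g d‖ ≤ M)
    (hf0 : ∀ d, a < d → d ≤ b → 0 ≤ f d)
    (hf1 : ∀ d, a < d → d ≤ b → f d ≤ 1)
    (hmono : ∀ d, a < d → d + 1 ≤ b → f (d + 1) ≤ f d) :
    ‖∑ d ∈ Finset.Ioc a b, g d * (f d : ℂ)‖ ≤ M := by
  rcases le_or_gt b a with h | h
  · rw [Finset.Ioc_eq_empty_of_le h, Finset.sum_empty, norm_zero]; exact hM0
  · rw [abel_identity g (fun d => (f d : ℂ)) a b h]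
    have key : ∀ d ∈ Finset.Ico (a + 1) b,
        ‖(∑ e ∈ Finset.Ioc a d, g e) * ((f d : ℂ) - (f (d + 1) : ℂ))‖
          ≤ M * (f d - f (d + 1)) := by
      intro d hd
      rw [Finset.mem_Ico] at hd
      rw [norm_mul, ← Complex.ofReal_sub, Complex.norm_real, Real.norm_eq_abs,
        abs_of_nonneg (by linarith [hmono d (by omega) (by omega)])]
      exact mul_le_mul_of_nonneg_right (hM d (by omega) (by omega))
        (by linarith [hmono d (by omega) (by omega)])
    calc ‖_‖ ≤ ‖(∑ d ∈ Finset.Ioc a b, g d) * (f b : ℂ)‖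
          + ‖∑ d ∈ Finset.Ico (a + 1) b,
              (∑ e ∈ Finset.Ioc a d, g e) * ((f d : ℂ) - (f (d + 1) : ℂ))‖ := by
          exact norm_add_le _ _
      _ ≤ M * f b + ∑ d ∈ Finset.Ico (a + 1) b, M * (f d - f (d + 1)) := by
          gcongr
          · rw [norm_mul, Complex.norm_real, Real.norm_eq_abs, abs_of_nonneg (hf0 b h le_rfl)]
            exact mul_le_mul_of_nonneg_right (hM b h.le le_rfl) (hf0 b h le_rfl)
          · exact le_trans (norm_sum_le _ _) (Finset.sum_le_sum key)
      _ = M * f b + M * (f (a + 1) - f b) := by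
          rw [← Finset.mul_sum, tele_sum f (a + 1) b h]
      _ = M * f (a + 1) := by ring
      _ ≤ M * 1 := mul_le_mul_of_nonneg_left (hf1 (a + 1) (by omega) h) hM0
      _ = M := mul_one M

private lemma triv_bound (a b : ℕ) (x : ℝ) :
    ‖∑ d ∈ Finset.Ioc a b, χ d * ((Int.fract (x / (d : ℝ)) : ℝ) : ℂ)‖
      ≤ ((b - a : ℕ) : ℝ) := by
  calc ‖∑ d ∈ Finset.Ioc a b, χ d * ((Int.fract (x / (d : ℝ)) : ℝ) : ℂ)‖
      ≤ ∑ d ∈ Finset.Ioc a b, ‖χ (d : ZMod q) * ((Int.fract (x / (d : ℝ)) : ℝ) : ℂ)‖ :=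
        norm_sum_le _ _
    _ ≤ ∑ d ∈ Finset.Ioc a b, 1 := by
        apply Finset.sum_le_sum
        intro d _
        rw [norm_mul, Complex.norm_real, Real.norm_eq_abs,
          abs_of_nonneg (Int.fract_nonneg _)]
        exact mul_le_one₀ (χ.norm_le_one _) (Int.fract_nonneg _) (Int.fract_lt_one _).le
    _ = ((b - a : ℕ) : ℝ) := by rw [Finset.sum_const, Nat.card_Ioc]; simp

end Aux

theorem stmt_12 (q : ℕ) (hq : 2 ≤ q) (χ : DirichletCharacter ℂ q) (hχ : χ ≠ 1)
    (x : ℝ) (hx : 1 ≤ x) :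
    ‖∑ d ∈ Finset.Icc 1 ⌊x⌋₊, χ d * ((Int.fract (x / (d : ℝ)) : ℝ) : ℂ)‖ ≤
      Real.sqrt (2 * Nat.totient q * x) := by
  have hx0 : (0:ℝ) ≤ x := by linarith
  set φ := q.totient with hφdef
  have hφ1 : 1 ≤ φ := Nat.totient_pos.mpr (by omega)
  have hφR : (1:ℝ) ≤ (φ : ℝ) := by exact_mod_cast hφ1
  set N := ⌊x⌋₊ with hNdef
  set t := Real.sqrt ((φ : ℝ) * x / 2) with htdef
  have hpos : (0:ℝ) < (φ : ℝ) * x / 2 := by nlinarith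
  have ht0 : 0 < t := Real.sqrt_pos.mpr hpos
  have ht2 : t * t = (φ : ℝ) * x / 2 := Real.mul_self_sqrt hpos.le
  set K := ⌊t⌋₊ with hKdef
  have hKt : (K : ℝ) ≤ t := Nat.floor_le ht0.le
  have htK1 : t < (K : ℝ) + 1 := Nat.lt_floor_add_one t
  have hrhs : Real.sqrt (2 * (φ : ℝ) * x) = 2 * t := by
    rw [show 2 * (φ : ℝ) * x = 2 ^ 2 * ((φ : ℝ) * x / 2) by ring,
      Real.sqrt_mul (by norm_num : (0:ℝ) ≤ 2 ^ 2),
      Real.sqrt_sq (by norm_num : (0:ℝ) ≤ 2), htdef]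
  rw [show Finset.Icc 1 N = Finset.Ioc 0 N from (Finset.Icc_add_one_left_eq_Ioc 0 N).symm, hrhs]
  rcases le_or_gt N K with hNK | hKN
  · -- trivial case
    calc ‖_‖ ≤ ((N - 0 : ℕ) : ℝ) := triv_bound χ 0 N x
      _ ≤ 2 * t := by
        have : ((N - 0 : ℕ) : ℝ) ≤ (K : ℝ) := by exact_mod_cast (by omega : N - 0 ≤ K)
        linarith
  · -- main case
    set T := ⌊x / ((K : ℝ) + 1)⌋₊ with hTdef
    set u : ℕ → ℕ := fun n => max K (⌊x / ((n : ℝ) + 1)⌋₊) with hudef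
    have hu : Antitone u := by
      intro m n hmn
      apply max_le_max le_rfl
      apply Nat.floor_mono
      apply div_le_div_of_nonneg_left hx0 (by positivity)
      have : ((m : ℝ)) ≤ (n : ℝ) := by exact_mod_cast hmn
      linarith
    have hu0 : u 0 = N := by
      simp only [hudef, Nat.cast_zero, zero_add, div_one]
      exact max_eq_right hKN.le
    have huT : u T = K := by
      apply max_eq_left
      have h1 : x / ((K : ℝ) + 1) < (T : ℝ) + 1 := Nat.lt_floor_add_one _
      have h2 : x / ((T : ℝ) + 1) < (K : ℝ) + 1 := by
        rw [div_lt_iff₀ (by positivity)]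
        rw [div_lt_iff₀ (by positivity)] at h1
        nlinarith
      have h2' : x / ((T : ℝ) + 1) < ((K + 1 : ℕ) : ℝ) := by push_cast; exact h2
      have := (Nat.floor_lt (by positivity)).mpr h2'
      omega
    have hsplit : (∑ d ∈ Finset.Ioc 0 N, χ d * ((Int.fract (x / (d : ℝ)) : ℝ) : ℂ))
        = (∑ d ∈ Finset.Ioc 0 K, χ d * ((Int.fract (x / (d : ℝ)) : ℝ) : ℂ))
          + ∑ d ∈ Finset.Ioc K N, χ d * ((Int.fract (x / (d : ℝ)) : ℝ) : ℂ) := by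
      rw [Finset.sum_Ioc_consecutive _ (Nat.zero_le K) hKN.le]
    have hblocks : (∑ d ∈ Finset.Ioc K N, χ d * ((Int.fract (x / (d : ℝ)) : ℝ) : ℂ))
        = ∑ n ∈ Finset.range T, ∑ d ∈ Finset.Ioc (u (n + 1)) (u n),
            χ d * ((Int.fract (x / (d : ℝ)) : ℝ) : ℂ) := by
      rw [blocks_sum _ u hu T, hu0, huT]
    have hblock_bound : ∀ n ∈ Finset.range T,
        ‖∑ d ∈ Finset.Ioc (u (n + 1)) (u n),
            χ d * ((Int.fract (x / (d : ℝ)) : ℝ) : ℂ)‖ ≤ (φ : ℝ) / 2 := by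
      intro n _
      apply abel_bound (fun d => χ d) (fun d => Int.fract (x / (d : ℝ))) (u (n + 1)) (u n)
        ((φ : ℝ) / 2) (by positivity)
      · intro s _ _; exact chi_partial χ hq hχ (u (n + 1)) s
      · intro d _ _; exact Int.fract_nonneg _
      · intro d _ _; exact (Int.fract_lt_one _).le
      · intro d hd1 hd2
        have hKd : K < d := lt_of_le_of_lt (le_max_left _ _) hd1
        have hun : u n = ⌊x / ((n : ℝ) + 1)⌋₊ := by
          rcases le_total K (⌊x / ((n : ℝ) + 1)⌋₊) with h | h
          · exact max_eq_right h
          · exfalso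
            have : u n = K := max_eq_left h
            omega
        have key : ∀ e : ℕ, ⌊x / ((n : ℝ) + 2)⌋₊ < e → e ≤ ⌊x / ((n : ℝ) + 1)⌋₊ →
            Int.fract (x / (e : ℝ)) = x / (e : ℝ) - ((n : ℝ) + 1) := by
          intro e he1 he2
          have he0 : (0:ℝ) < (e : ℝ) := by
            have : 0 < e := by omega
            exact_mod_cast this
          have hn1 : (0:ℝ) < (n : ℝ) + 1 := by positivity
          have hn2 : (0:ℝ) < (n : ℝ) + 2 := by positivity
          have hlow : (n : ℝ) + 1 ≤ x / (e : ℝ) := by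
            have h1 : (e : ℝ) ≤ x / ((n : ℝ) + 1) :=
              (Nat.le_floor_iff (by positivity)).mp he2
            rw [le_div_iff₀ hn1] at h1
            rw [le_div_iff₀ he0]
            nlinarith
          have hup : x / (e : ℝ) < (n : ℝ) + 2 := by
            have h1 : x / ((n : ℝ) + 2) < (e : ℝ) := by
              have := (Nat.floor_lt (by positivity : (0:ℝ) ≤ x / ((n : ℝ) + 2))).mp he1
              exact_mod_cast this
            rw [div_lt_iff₀ hn2] at h1
            rw [div_lt_iff₀ he0]
            nlinarith
          have hfl : ⌊x / (e : ℝ)⌋ = (n : ℤ) + 1 := by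
            rw [Int.floor_eq_iff]
            constructor
            · push_cast; exact hlow
            · push_cast; linarith
          rw [Int.fract, hfl]
          push_cast
          ring
        have hd2' : d + 1 ≤ ⌊x / ((n : ℝ) + 1)⌋₊ := hun ▸ hd2
        have hd1' : ⌊x / ((n : ℝ) + 2)⌋₊ < d := by
          refine lt_of_le_of_lt ?_ hd1
          refine le_trans ?_ (le_max_right K _)
          apply le_of_eq
          congr 2
          push_cast
          ring
        have e1 := key d hd1' (by omega)
        have e2 := key (d + 1) (by omega) hd2'
        have hd0 : (0:ℝ) < (d : ℝ) := by
          have : 0 < d := by omega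
          exact_mod_cast this
        push_cast at e2 ⊢
        rw [e1, e2]
        have : x / ((d : ℝ) + 1) ≤ x / (d : ℝ) := by
          apply div_le_div_of_nonneg_left hx0 hd0
          linarith
        linarith
    -- assemble
    have hT : (T : ℝ) * ((φ : ℝ) / 2) ≤ t := by
      have h1 : (T : ℝ) ≤ x / ((K : ℝ) + 1) := Nat.floor_le (by positivity)
      have h2 : x / ((K : ℝ) + 1) ≤ x / t := by
        apply div_le_div_of_nonneg_left hx0 ht0
        linarith
      have h3 : x / t * ((φ : ℝ) / 2) = t := by
        rw [div_mul_eq_mul_div, div_eq_iff ht0.ne']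
        linear_combination -ht2
      have h4 : (T : ℝ) * ((φ : ℝ) / 2) ≤ x / t * ((φ : ℝ) / 2) := by
        apply mul_le_mul_of_nonneg_right (le_trans h1 h2)
        positivity
      linarith
    have hpart1 : ‖∑ d ∈ Finset.Ioc 0 K, χ d * ((Int.fract (x / (d : ℝ)) : ℝ) : ℂ)‖
        ≤ (K : ℝ) := by
      have h := triv_bound χ 0 K x
      simpa using h
    have hpart2 : ‖∑ d ∈ Finset.Ioc K N, χ d * ((Int.fract (x / (d : ℝ)) : ℝ) : ℂ)‖
        ≤ (T : ℝ) * ((φ : ℝ) / 2) := by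
      rw [hblocks]
      refine le_trans (norm_sum_le _ _) ?_
      calc ∑ n ∈ Finset.range T, ‖∑ d ∈ Finset.Ioc (u (n + 1)) (u n),
              χ d * ((Int.fract (x / (d : ℝ)) : ℝ) : ℂ)‖
          ≤ ∑ _n ∈ Finset.range T, (φ : ℝ) / 2 := Finset.sum_le_sum hblock_bound
        _ = (T : ℝ) * ((φ : ℝ) / 2) := by
            rw [Finset.sum_const, Finset.card_range, nsmul_eq_mul]
    rw [hsplit]
    refine le_trans (norm_add_le _ _) ?_
    linarith
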